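/- Let μ : Ω → ℝ be integrable with respect to a probability measure P and let α ∈ (0,1). Then sup over measurable h : Ω → [0,1] with E_P[h] = 1−α of (1/(1−α))·E_P[h·μ] equals min over η ∈ ℝ of (1/(1−α))·E_P[(μ−η)₊] + η, where (x)₊ = max(x,0). -/

import Mathlib

open MeasureTheory ENNReal Set

open ProbabilityTheory Filter in
/-- Existence of an exact quantile for an atomless probability measure on `ℝ`. -/
lemma exists_quantile (ν : Measure ℝ) [IsProbabilityMeasure ν] (h : ∀ t, ν {t} = 0)
    (α : ℝ) (hα : α ∈ Ioo (0:ℝ) 1) :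
    ∃ η : ℝ, ν (Iic η) = ENNReal.ofReal α := by
  have hcontF : Continuous (cdf ν) := by
    rw [continuous_iff_continuousAt]
    intro t
    rw [(monotone_cdf ν).continuousAt_iff_leftLim_eq_rightLim, (cdf ν).rightLim_eq]
    have h1 : (cdf ν).measure {t} = ENNReal.ofReal (cdf ν t - Function.leftLim (cdf ν) t) :=
      StieltjesFunction.measure_singleton _ t
    rw [measure_cdf, h t] at h1
    have h2 : cdf ν t - Function.leftLim (cdf ν) t ≤ 0 := by
      by_contra hc
      push_neg at hc
      rw [eq_comm, ENNReal.ofReal_eq_zero] at h1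
      linarith
    have h3 := Monotone.leftLim_le (monotone_cdf ν) (le_refl t)
    linarith [h2, h3]
  obtain ⟨a, ha⟩ : ∃ a, cdf ν a < α := by
    have := (tendsto_cdf_atBot ν).eventually (eventually_lt_nhds hα.1)
    exact this.exists
  obtain ⟨b, hb⟩ : ∃ b, α < cdf ν b := by
    have := (tendsto_cdf_atTop ν).eventually (eventually_gt_nhds hα.2)
    exact this.exists
  have hab : a ≤ b := by
    by_contra hc
    push_neg at hc
    exact absurd ((monotone_cdf ν) hc.le) (by linarith)
  have := intermediate_value_Icc hab hcontF.continuousOn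
    (⟨ha.le, hb.le⟩ : α ∈ Icc (cdf ν a) (cdf ν b))
  obtain ⟨η, _, hη⟩ := this
  exact ⟨η, by rw [← ofReal_cdf ν η, hη]⟩

/-- Strong duality between the worst-case subpopulation risk and its CVaR dual
formulation (case `Z = ∅`): the supremum over selection functions `h` equals the
minimum of the dual objective, and the minimum is attained. -/
theorem stmt_1 {Ω : Type*} [MeasurableSpace Ω] (P : Measure Ω) [IsProbabilityMeasure P]
    (μ : Ω → ℝ) (hμm : Measurable μ) (hμi : Integrable μ P)
    (α : ℝ) (hα : α ∈ Ioo (0 : ℝ) 1)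
    (hcont : ∀ t : ℝ, P {ω | μ ω = t} = 0) :
    sSup {r : ℝ | ∃ h : Ω → ℝ, Measurable h ∧ (∀ ω, h ω ∈ Icc (0 : ℝ) 1) ∧
        (∫ ω, h ω ∂P) = 1 - α ∧ r = (1 - α)⁻¹ * ∫ ω, h ω * μ ω ∂P} =
      sInf {v : ℝ | ∃ η : ℝ, v = (1 - α)⁻¹ * (∫ ω, max (μ ω - η) 0 ∂P) + η} ∧
    sInf {v : ℝ | ∃ η : ℝ, v = (1 - α)⁻¹ * (∫ ω, max (μ ω - η) 0 ∂P) + η} ∈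
      {v : ℝ | ∃ η : ℝ, v = (1 - α)⁻¹ * (∫ ω, max (μ ω - η) 0 ∂P) + η} := by
  obtain ⟨hα0, hα1⟩ := hα
  have h1α : (0:ℝ) < 1 - α := by linarith
  have h1αne : (1:ℝ) - α ≠ 0 := ne_of_gt h1α
  set S : Set ℝ := {r : ℝ | ∃ h : Ω → ℝ, Measurable h ∧ (∀ ω, h ω ∈ Icc (0 : ℝ) 1) ∧
        (∫ ω, h ω ∂P) = 1 - α ∧ r = (1 - α)⁻¹ * ∫ ω, h ω * μ ω ∂P} with hSdef
  set V : Set ℝ := {v : ℝ | ∃ η : ℝ, v = (1 - α)⁻¹ * (∫ ω, max (μ ω - η) 0 ∂P) + η} with hVdef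
  -- integrability of the positive parts
  have imax : ∀ η : ℝ, Integrable (fun ω => max (μ ω - η) 0) P := fun η =>
    (hμi.sub (integrable_const η)).pos_part
  -- Every element of S is at most every element of V
  have key : ∀ r ∈ S, ∀ v ∈ V, r ≤ v := by
    rintro r ⟨h, hm, hIcc, hEh, rfl⟩ v ⟨η, rfl⟩
    have ihμη : Integrable (fun ω => h ω * (μ ω - η)) P := by
      refine (hμi.sub (integrable_const η)).mono
        ((hm.mul (hμm.sub measurable_const)).aestronglyMeasurable) (ae_of_all _ fun ω => ?_)
      simp only [Real.norm_eq_abs, abs_mul]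
      have h01 := hIcc ω
      have : |h ω| ≤ 1 := by rw [abs_of_nonneg h01.1]; exact h01.2
      exact mul_le_of_le_one_left (abs_nonneg _) this
    have ih : Integrable h P := by
      refine (integrable_const (1:ℝ)).mono hm.aestronglyMeasurable (ae_of_all _ fun ω => ?_)
      have h01 := hIcc ω
      simp only [Real.norm_eq_abs]
      rw [abs_of_nonneg h01.1, abs_of_nonneg (zero_le_one)]
      exact h01.2
    have hsplit : (∫ ω, h ω * μ ω ∂P)
        = (∫ ω, h ω * (μ ω - η) ∂P) + η * (1 - α) := by
      have : (fun ω => h ω * μ ω) = fun ω => h ω * (μ ω - η) + η * h ω := by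
        funext ω; ring
      rw [this, integral_add ihμη (ih.const_mul η), integral_const_mul, hEh]
    have hmono : (∫ ω, h ω * (μ ω - η) ∂P) ≤ ∫ ω, max (μ ω - η) 0 ∂P := by
      refine integral_mono ihμη (imax η) fun ω => ?_
      have h01 := hIcc ω
      rcases le_or_gt 0 (μ ω - η) with hx | hx
      · calc h ω * (μ ω - η) ≤ μ ω - η := mul_le_of_le_one_left hx h01.2
          _ ≤ max (μ ω - η) 0 := le_max_left _ _
      · calc h ω * (μ ω - η) ≤ 0 := mul_nonpos_of_nonneg_of_nonpos h01.1 hx.le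
          _ ≤ max (μ ω - η) 0 := le_max_right _ _
    rw [hsplit]
    have := mul_le_mul_of_nonneg_left (add_le_add_left hmono (η * (1 - α)))
      (le_of_lt (inv_pos.mpr h1α))
    calc (1 - α)⁻¹ * ((∫ ω, h ω * (μ ω - η) ∂P) + η * (1 - α))
        ≤ (1 - α)⁻¹ * ((∫ ω, max (μ ω - η) 0 ∂P) + η * (1 - α)) := this
      _ = (1 - α)⁻¹ * (∫ ω, max (μ ω - η) 0 ∂P) + η := by
        rw [mul_add, mul_comm η (1 - α), ← mul_assoc, inv_mul_cancel₀ h1αne, one_mul]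
  -- Construct the optimal η* and the optimal selection function
  have hνprob : IsProbabilityMeasure (P.map μ) := Measure.isProbabilityMeasure_map hμm.aemeasurable
  have hνatom : ∀ t : ℝ, (P.map μ) {t} = 0 := by
    intro t
    rw [Measure.map_apply hμm (measurableSet_singleton t)]
    have : μ ⁻¹' {t} = {ω | μ ω = t} := by ext ω; simp
    rw [this]; exact hcont t
  obtain ⟨η₀, hη₀⟩ := exists_quantile (P.map μ) hνatom α ⟨hα0, hα1⟩
  rw [Measure.map_apply hμm measurableSet_Iic] at hη₀
  have hIic : μ ⁻¹' Iic η₀ = {ω | μ ω ≤ η₀} := by ext ω; simp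
  rw [hIic] at hη₀
  set A : Set Ω := {ω | η₀ < μ ω} with hAdef
  have hAmeas : MeasurableSet A := measurableSet_lt measurable_const hμm
  have hAcompl : A = {ω | μ ω ≤ η₀}ᶜ := by ext ω; simp [hAdef, not_le]
  have hPA : (P A).toReal = 1 - α := by
    rw [hAcompl, measure_compl (measurableSet_le hμm measurable_const) (measure_ne_top P _), hη₀, measure_univ]
    rw [ENNReal.toReal_sub_of_le (by simpa using hα1.le) one_ne_top]
    simp [ENNReal.toReal_ofReal hα0.le]
  set hstar : Ω → ℝ := A.indicator (fun _ => (1:ℝ)) with hstardef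
  have hstarm : Measurable hstar := measurable_const.indicator hAmeas
  have hstarIcc : ∀ ω, hstar ω ∈ Icc (0:ℝ) 1 := by
    intro ω
    by_cases hω : ω ∈ A <;> simp [hstardef, indicator, hω]
  have hstarint : Integrable hstar P := (integrable_const (1:ℝ)).indicator hAmeas
  have hstarE : (∫ ω, hstar ω ∂P) = 1 - α := by
    rw [hstardef, integral_indicator_const (1:ℝ) hAmeas, smul_eq_mul, mul_one, measureReal_def, hPA]
  have hptwise : (fun ω => hstar ω * μ ω)
      = fun ω => max (μ ω - η₀) 0 + η₀ * hstar ω := by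
    funext ω
    by_cases hω : ω ∈ A
    · have hlt : η₀ < μ ω := hω
      simp only [hstardef, indicator_of_mem hω]
      rw [max_eq_left (by linarith)]
      ring
    · have hle : μ ω ≤ η₀ := not_lt.mp hω
      simp only [hstardef, indicator_of_notMem hω]
      rw [max_eq_right (by linarith)]
      ring
  have hstarμ : (∫ ω, hstar ω * μ ω ∂P)
      = (∫ ω, max (μ ω - η₀) 0 ∂P) + η₀ * (1 - α) := by
    rw [hptwise, integral_add (imax η₀) (hstarint.const_mul η₀), integral_const_mul, hstarE]
  -- the common optimal value
  set v₀ : ℝ := (1 - α)⁻¹ * (∫ ω, max (μ ω - η₀) 0 ∂P) + η₀ with hv₀def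
  have hv₀V : v₀ ∈ V := ⟨η₀, rfl⟩
  have hv₀S : v₀ ∈ S := by
    refine ⟨hstar, hstarm, hstarIcc, hstarE, ?_⟩
    rw [hstarμ, hv₀def, mul_add, mul_comm η₀ (1 - α), ← mul_assoc,
      inv_mul_cancel₀ h1αne, one_mul]
  have hSne : S.Nonempty := ⟨v₀, hv₀S⟩
  have hVne : V.Nonempty := ⟨v₀, hv₀V⟩
  have hSbdd : BddAbove S := ⟨v₀, fun r hr => key r hr v₀ hv₀V⟩
  have hVbdd : BddBelow V := ⟨v₀, fun v hv => key v₀ hv₀S v hv⟩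
  have h1 : sSup S ≤ sInf V :=
    le_csInf hVne fun v hv => csSup_le hSne fun r hr => key r hr v hv
  have h2 : sInf V ≤ v₀ := csInf_le hVbdd hv₀V
  have h3 : v₀ ≤ sSup S := le_csSup hSbdd hv₀S
  have heq : sSup S = sInf V := le_antisymm h1 (h2.trans h3)
  have hInfEq : sInf V = v₀ := le_antisymm h2 (h3.trans h1)
  exact ⟨heq, hInfEq ▸ hv₀V⟩
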